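/- arXiv:1009.3128 — 2 statements merged into one kernel-verified Lean document; each statement's English description precedes it below -/
import Mathlib

section
/- Let ϑ, τ > 0 be real numbers, k ∈ ℝ, and m a nonnegative integer. Then there is a constant C > 0 such that for all z in the open unit ball, ∑_{i=0}^{m} ω_{ϑ-i}(z)·ω_{τ+i-k}(z) ≤ C·(ω_{ϑ-m}(z) + ω_{τ-k}(z)). -/
open MeasureTheory Metric

/-- The weight function `ω_t`: `ω_t(z) = (1-|z|²)^{min(t,0)}` if `t ≠ 0`,
and `ω_0(z) = log(e/(1-|z|²))`, expressed in terms of `x = ‖z‖`. -/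
noncomputable def omegaW (t x : ℝ) : ℝ :=
  if t = 0 then Real.log (Real.exp 1 / (1 - x ^ 2)) else (1 - x ^ 2) ^ (min t 0)

/-- The weight as a function of `u = 1 - x²`. -/
noncomputable def omW (t u : ℝ) : ℝ :=
  if t = 0 then Real.log (Real.exp 1 / u) else u ^ (min t 0)

lemma omegaW_eq (t x : ℝ) : omegaW t x = omW t (1 - x ^ 2) := rfl

lemma one_le_L {u : ℝ} (hu : 0 < u) (hu1 : u ≤ 1) : 1 ≤ Real.log (Real.exp 1 / u) := by
  rw [Real.log_div (Real.exp_ne_zero 1) hu.ne', Real.log_exp]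
  have := Real.log_nonpos hu.le hu1
  linarith

lemma L_le {u ε : ℝ} (hu : 0 < u) (hu1 : u ≤ 1) (hε : 0 < ε) :
    Real.log (Real.exp 1 / u) ≤ (1 + 1/ε) * u ^ (-ε) := by
  have h1 : Real.log (Real.exp 1 / u) = 1 - Real.log u := by
    rw [Real.log_div (Real.exp_ne_zero 1) hu.ne', Real.log_exp]
  have hp : 0 < u ^ (-ε) := Real.rpow_pos_of_pos hu _
  have h2 : Real.log (u ^ (-ε)) = -ε * Real.log u := Real.log_rpow hu _
  have h3 : Real.log (u ^ (-ε)) ≤ u ^ (-ε) - 1 := Real.log_le_sub_one_of_pos hp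
  have h4 : 1 ≤ u ^ (-ε) := Real.one_le_rpow_of_pos_of_le_one_of_nonpos hu hu1 (by linarith)
  rw [h1]
  have h5 : -ε * Real.log u ≤ u ^ (-ε) - 1 := h2 ▸ h3
  have h6 : -Real.log u * ε ≤ u ^ (-ε) := by nlinarith
  have h7 : -Real.log u ≤ u ^ (-ε) / ε := (le_div_iff₀ hε).mpr h6
  have h8 : (1 + 1 / ε) * u ^ (-ε) = u ^ (-ε) + u ^ (-ε) / ε := by
    field_simp
  linarith

lemma rpow_min_le_omW {t u : ℝ} (hu : 0 < u) (hu1 : u ≤ 1) : u ^ (min t 0) ≤ omW t u := by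
  by_cases ht : t = 0
  · simp only [omW, if_pos ht, ht, min_self, Real.rpow_zero]
    exact one_le_L hu hu1
  · simp [omW, ht]

lemma pow_le_omW {t u e : ℝ} (hu : 0 < u) (hu1 : u ≤ 1) (h : min t 0 ≤ e) :
    u ^ e ≤ omW t u :=
  (Real.rpow_le_rpow_of_exponent_ge hu hu1 h).trans (rpow_min_le_omW hu hu1)

lemma one_le_omW {t u : ℝ} (hu : 0 < u) (hu1 : u ≤ 1) : 1 ≤ omW t u := by
  have := pow_le_omW (e := 0) hu hu1 (min_le_right t 0)
  rwa [Real.rpow_zero] at this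

lemma omW_pos {t u : ℝ} (hu : 0 < u) (hu1 : u ≤ 1) : 0 < omW t u :=
  lt_of_lt_of_le one_pos (one_le_omW hu hu1)

lemma L_le_omW {t u ε : ℝ} (hu : 0 < u) (hu1 : u ≤ 1) (hε : 0 < ε) (h : min t 0 ≤ -ε) :
    Real.log (Real.exp 1 / u) ≤ (1 + 1/ε) * omW t u :=
  (L_le hu hu1 hε).trans (mul_le_mul_of_nonneg_left (pow_le_omW hu hu1 h) (by positivity))

lemma omW_of_neg {t u : ℝ} (ht : t < 0) : omW t u = u ^ t := by
  simp [omW, ne_of_lt ht, min_eq_left ht.le]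

lemma omW_of_pos {t u : ℝ} (ht : 0 < t) : omW t u = 1 := by
  simp [omW, ne_of_gt ht, min_eq_right ht.le]

lemma omW_of_zero {u : ℝ} : omW 0 u = Real.log (Real.exp 1 / u) := by
  simp [omW]

lemma finL {C c d u f : ℝ} (hu : 0 < u) (hu1 : u ≤ 1) (hC : 0 ≤ C)
    (h : f ≤ C * omW c u) : f ≤ C * (omW c u + omW d u) :=
  h.trans (mul_le_mul_of_nonneg_left (le_add_of_nonneg_right (omW_pos hu hu1).le) hC)

lemma finR {C c d u f : ℝ} (hu : 0 < u) (hu1 : u ≤ 1) (hC : 0 ≤ C)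
    (h : f ≤ C * omW d u) : f ≤ C * (omW c u + omW d u) :=
  h.trans (mul_le_mul_of_nonneg_left (le_add_of_nonneg_left (omW_pos hu hu1).le) hC)

lemma key (ϑ τ k : ℝ) (m i : ℕ) (hϑ : 0 < ϑ) (him : i ≤ m) :
    ∃ C : ℝ, 0 < C ∧ ∀ u : ℝ, 0 < u → u ≤ 1 →
      omW (ϑ - i) u * omW (τ + i - k) u ≤ C * (omW (ϑ - m) u + omW (τ - k) u) := by
  have him' : (i : ℝ) ≤ (m : ℝ) := Nat.cast_le.mpr him
  rcases lt_trichotomy (ϑ - (i:ℝ)) 0 with ha | ha | ha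
  · -- a < 0
    rcases lt_trichotomy (τ + (i:ℝ) - k) 0 with hb | hb | hb
    · -- case 9 : a<0, b<0
      refine ⟨1, one_pos, fun u hu hu1 => ?_⟩
      refine finR hu hu1 zero_le_one ?_
      rw [omW_of_neg ha, omW_of_neg hb, ← Real.rpow_add hu, one_mul]
      exact pow_le_omW hu hu1 (le_trans (min_le_left _ _) (by linarith))
    · -- case 8 : a<0, b=0
      refine ⟨1 + 1/ϑ, by positivity, fun u hu hu1 => ?_⟩
      refine finR hu hu1 (by positivity) ?_
      rw [omW_of_neg ha, hb, omW_of_zero]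
      calc u ^ (ϑ - (i:ℝ)) * Real.log (Real.exp 1 / u)
          ≤ u ^ (ϑ - (i:ℝ)) * ((1 + 1/ϑ) * u ^ (-ϑ)) :=
            mul_le_mul_of_nonneg_left (L_le hu hu1 hϑ) (Real.rpow_pos_of_pos hu _).le
        _ = (1 + 1/ϑ) * (u ^ (ϑ - (i:ℝ)) * u ^ (-ϑ)) := by ring
        _ = (1 + 1/ϑ) * u ^ (ϑ - (i:ℝ) + -ϑ) := by rw [← Real.rpow_add hu]
        _ ≤ (1 + 1/ϑ) * omW (τ - k) u :=
            mul_le_mul_of_nonneg_left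
              (pow_le_omW hu hu1 (le_trans (min_le_left _ _) (by linarith)))
              (by positivity)
    · -- case 7 : a<0, b>0
      refine ⟨1, one_pos, fun u hu hu1 => ?_⟩
      refine finL hu hu1 zero_le_one ?_
      rw [omW_of_neg ha, omW_of_pos hb, mul_one, one_mul]
      exact pow_le_omW hu hu1 (le_trans (min_le_left _ _) (by linarith))
  · -- a = 0
    have hi1 : (1:ℝ) ≤ (i:ℝ) := by
      have h0 : 0 < i := by exact_mod_cast (show (0:ℝ) < (i:ℝ) by linarith)
      exact_mod_cast h0
    rcases lt_trichotomy (τ + (i:ℝ) - k) 0 with hb | hb | hb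
    · -- case 6 : a=0, b<0
      refine ⟨2, two_pos, fun u hu hu1 => ?_⟩
      refine finR hu hu1 (by norm_num) ?_
      rw [ha, omW_of_zero, omW_of_neg hb]
      calc Real.log (Real.exp 1 / u) * u ^ (τ + (i:ℝ) - k)
          ≤ ((1 + 1/1) * u ^ (-(1:ℝ))) * u ^ (τ + (i:ℝ) - k) :=
            mul_le_mul_of_nonneg_right (L_le hu hu1 one_pos) (Real.rpow_pos_of_pos hu _).le
        _ = 2 * (u ^ (-(1:ℝ)) * u ^ (τ + (i:ℝ) - k)) := by norm_num; ring
        _ = 2 * u ^ (-(1:ℝ) + (τ + (i:ℝ) - k)) := by rw [← Real.rpow_add hu]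
        _ ≤ 2 * omW (τ - k) u :=
            mul_le_mul_of_nonneg_left
              (pow_le_omW hu hu1 (le_trans (min_le_left _ _) (by linarith)))
              (by norm_num)
    · -- case 5 : a=0, b=0
      refine ⟨9, by norm_num, fun u hu hu1 => ?_⟩
      refine finR hu hu1 (by norm_num) ?_
      rw [ha, hb, omW_of_zero]
      have hL : Real.log (Real.exp 1 / u) ≤ 3 * u ^ (-(1/2 : ℝ)) := by
        have := L_le hu hu1 (by norm_num : (0:ℝ) < 1/2)
        norm_num at this ⊢
        linarith
      have hL0 : 0 ≤ Real.log (Real.exp 1 / u) := by linarith [one_le_L hu hu1]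
      calc Real.log (Real.exp 1 / u) * Real.log (Real.exp 1 / u)
          ≤ (3 * u ^ (-(1/2:ℝ))) * (3 * u ^ (-(1/2:ℝ))) := by
            apply mul_le_mul hL hL hL0
            positivity
        _ = 9 * (u ^ (-(1/2:ℝ)) * u ^ (-(1/2:ℝ))) := by ring
        _ = 9 * u ^ (-(1/2:ℝ) + -(1/2:ℝ)) := by rw [← Real.rpow_add hu]
        _ ≤ 9 * omW (τ - k) u := by
            refine mul_le_mul_of_nonneg_left
              (pow_le_omW hu hu1 (le_trans (min_le_left _ _) (by linarith))) (by norm_num)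
    · -- case 4 : a=0, b>0
      rcases eq_or_lt_of_le him with he | hlt
      · have hc : ϑ - (m:ℝ) = 0 := by
          have : (i:ℝ) = (m:ℝ) := by exact_mod_cast he
          linarith
        refine ⟨1, one_pos, fun u hu hu1 => ?_⟩
        rw [ha, hc, omW_of_zero, omW_of_pos hb, mul_one, one_mul]
        linarith [omW_pos (t := τ - k) hu hu1]
      · have hm : (i:ℝ) + 1 ≤ (m:ℝ) := by exact_mod_cast hlt
        refine ⟨2, two_pos, fun u hu hu1 => ?_⟩
        refine finL hu hu1 (by norm_num) ?_
        rw [ha, omW_of_zero, omW_of_pos hb, mul_one]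
        have := L_le_omW (t := ϑ - (m:ℝ)) hu hu1 one_pos
          (le_trans (min_le_left _ _) (by linarith))
        norm_num at this ⊢
        linarith
  · -- a > 0
    rcases lt_trichotomy (τ + (i:ℝ) - k) 0 with hb | hb | hb
    · -- case 2 : a>0, b<0
      refine ⟨1, one_pos, fun u hu hu1 => ?_⟩
      refine finR hu hu1 zero_le_one ?_
      rw [omW_of_pos ha, omW_of_neg hb, one_mul, one_mul]
      refine pow_le_omW hu hu1 (le_trans (min_le_left _ _) ?_)
      have : (0:ℝ) ≤ (i:ℝ) := Nat.cast_nonneg i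
      linarith
    · -- case 3 : a>0, b=0
      rcases Nat.eq_zero_or_pos i with hi0 | hip
      · subst hi0
        have hd : τ - k = 0 := by push_cast at hb; linarith
        refine ⟨1, one_pos, fun u hu hu1 => ?_⟩
        rw [omW_of_pos ha, hb, hd, omW_of_zero, one_mul, one_mul]
        linarith [omW_pos (t := ϑ - (m:ℝ)) hu hu1]
      · have hi1 : (1:ℝ) ≤ (i:ℝ) := by exact_mod_cast hip
        refine ⟨2, two_pos, fun u hu hu1 => ?_⟩
        refine finR hu hu1 (by norm_num) ?_
        rw [omW_of_pos ha, hb, omW_of_zero, one_mul]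
        have := L_le_omW (t := τ - k) hu hu1 one_pos
          (le_trans (min_le_left _ _) (by linarith))
        norm_num at this ⊢
        linarith
    · -- case 1 : a>0, b>0
      refine ⟨1, one_pos, fun u hu hu1 => ?_⟩
      rw [omW_of_pos ha, omW_of_pos hb, one_mul, one_mul]
      linarith [one_le_omW (t := ϑ - (m:ℝ)) hu hu1, omW_pos (t := τ - k) hu hu1]

theorem stmt1 (n : ℕ) (ϑ τ : ℝ) (k : ℝ) (m : ℕ) (hϑ : 0 < ϑ) (hτ : 0 < τ) :
    ∃ C > 0, ∀ z : EuclideanSpace ℂ (Fin n), ‖z‖ < 1 →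
      ∑ i ∈ Finset.range (m + 1), omegaW (ϑ - i) ‖z‖ * omegaW (τ + i - k) ‖z‖ ≤
        C * (omegaW (ϑ - m) ‖z‖ + omegaW (τ - k) ‖z‖) := by
  have key' : ∀ i : ℕ, ∃ C : ℝ, 0 < C ∧ (i ≤ m → ∀ u : ℝ, 0 < u → u ≤ 1 →
      omW (ϑ - i) u * omW (τ + i - k) u ≤ C * (omW (ϑ - m) u + omW (τ - k) u)) := by
    intro i
    by_cases h : i ≤ m
    · obtain ⟨C, hC, hC2⟩ := key ϑ τ k m i hϑ h
      exact ⟨C, hC, fun _ => hC2⟩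
    · exact ⟨1, one_pos, fun h' => absurd h' h⟩
  choose C hCpos hC using key'
  refine ⟨∑ i ∈ Finset.range (m + 1), C i, ?_, ?_⟩
  · exact Finset.sum_pos (fun i _ => hCpos i) ⟨0, Finset.mem_range.mpr (Nat.succ_pos m)⟩
  · intro z hz
    have hn : (0:ℝ) ≤ ‖z‖ := norm_nonneg z
    have hu : 0 < 1 - ‖z‖ ^ 2 := by nlinarith
    have hu1 : 1 - ‖z‖ ^ 2 ≤ 1 := by nlinarith
    calc ∑ i ∈ Finset.range (m + 1), omegaW (ϑ - i) ‖z‖ * omegaW (τ + i - k) ‖z‖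
        = ∑ i ∈ Finset.range (m + 1),
            omW (ϑ - i) (1 - ‖z‖ ^ 2) * omW (τ + i - k) (1 - ‖z‖ ^ 2) := rfl
      _ ≤ ∑ i ∈ Finset.range (m + 1),
            C i * (omW (ϑ - m) (1 - ‖z‖ ^ 2) + omW (τ - k) (1 - ‖z‖ ^ 2)) := by
          refine Finset.sum_le_sum fun i hi => ?_
          exact hC i (Nat.lt_succ_iff.mp (Finset.mem_range.mp hi)) _ hu hu1
      _ = (∑ i ∈ Finset.range (m + 1), C i) *
            (omW (ϑ - m) (1 - ‖z‖ ^ 2) + omW (τ - k) (1 - ‖z‖ ^ 2)) :=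
          (Finset.sum_mul _ _ _).symm
      _ = (∑ i ∈ Finset.range (m + 1), C i) *
            (omegaW (ϑ - m) ‖z‖ + omegaW (τ - k) ‖z‖) := rfl
end

section
/- Let 0 < ϑ₀ ≤ τ₀ < 1/2, 0 < ϑ ≤ τ, integers m ≤ k with k > τ, m > ϑ. Then multiplication is bounded: ‖φψ‖_{G^{ϑ₀}_{ϑ,m}} ≤ C‖φ‖_{G^{τ₀}_{τ,k}}·‖ψ‖_{G^{ϑ₀}_{ϑ,m}} for all φ ∈ G^{τ₀}_{τ,k} and ψ ∈ G^{ϑ₀}_{ϑ,m}. -/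
open MeasureTheory Metric

variable {n : ℕ}

/-- The Wirtinger derivative `∂f/∂z_j = (∂f/∂x_j - i ∂f/∂y_j)/2`. -/
noncomputable def wirt (n : ℕ) (j : Fin n) (f : EuclideanSpace ℂ (Fin n) → ℂ)
    (z : EuclideanSpace ℂ (Fin n)) : ℂ :=
  (fderiv ℝ f z (EuclideanSpace.single j (1 : ℂ)) -
      Complex.I * fderiv ℝ f z (EuclideanSpace.single j (Complex.I))) / 2

/-- The conjugate Wirtinger derivative `∂f/∂z̄_j = (∂f/∂x_j + i ∂f/∂y_j)/2`. -/
noncomputable def wirtBar (n : ℕ) (j : Fin n) (f : EuclideanSpace ℂ (Fin n) → ℂ)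
    (z : EuclideanSpace ℂ (Fin n)) : ℂ :=
  (fderiv ℝ f z (EuclideanSpace.single j (1 : ℂ)) +
      Complex.I * fderiv ℝ f z (EuclideanSpace.single j (Complex.I))) / 2

/-- Iterated holomorphic partial derivative `∂_α` along a list of coordinate directions. -/
noncomputable def wirtIter (n : ℕ) (L : List (Fin n)) (f : EuclideanSpace ℂ (Fin n) → ℂ) :
    EuclideanSpace ℂ (Fin n) → ℂ :=
  L.foldr (fun j g => wirt n j g) f

/-- `|∂^j f(z)|`: the sum of the absolute values of all holomorphic partial derivatives
of order `j` of `f` at `z`. -/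
noncomputable def derNormSum (n : ℕ) (j : ℕ) (f : EuclideanSpace ℂ (Fin n) → ℂ)
    (z : EuclideanSpace ℂ (Fin n)) : ℝ :=
  ∑ v : Fin j → Fin n, ‖wirtIter n (List.ofFn v) f z‖

/-- The conjugate tangential derivative `D̄_{ij} f = z_i ∂̄_j f - z_j ∂̄_i f`. -/
noncomputable def tangBar (n : ℕ) (i j : Fin n) (f : EuclideanSpace ℂ (Fin n) → ℂ)
    (z : EuclideanSpace ℂ (Fin n)) : ℂ :=
  z i * wirtBar n j f z - z j * wirtBar n i f z

/-- `φ̃(z) = (1-|z|²)|∂̄φ(z)| + (1-|z|²)^{1/2}|∂̄_T φ(z)|`. -/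
noncomputable def tildeFn (n : ℕ) (f : EuclideanSpace ℂ (Fin n) → ℂ)
    (z : EuclideanSpace ℂ (Fin n)) : ℝ :=
  (1 - ‖z‖ ^ 2) * ∑ j : Fin n, ‖wirtBar n j f z‖ +
    Real.sqrt (1 - ‖z‖ ^ 2) *
      ∑ i : Fin n, ∑ j : Fin n, if i < j then ‖tangBar n i j f z‖ else 0

/-- `φ` belongs to `G^{τ₀}_{τ,k}` with norm (bound) `A`: `φ ∈ C^k(𝔹) ∩ C(𝔹̄)`,
`|∂^j φ(z)| ≤ A ω_{τ-j}(z)` for `0 ≤ j ≤ k`, and `φ̃(z) ≤ A (1-|z|²)^{τ₀}`. -/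
def InG (n : ℕ) (τ₀ τ : ℝ) (k : ℕ) (A : ℝ) (φ : EuclideanSpace ℂ (Fin n) → ℂ) : Prop :=
  ContDiffOn ℝ (k : ℕ∞) φ (ball (0 : EuclideanSpace ℂ (Fin n)) 1) ∧
    ContinuousOn φ (closedBall (0 : EuclideanSpace ℂ (Fin n)) 1) ∧
    (∀ j ≤ k, ∀ z ∈ ball (0 : EuclideanSpace ℂ (Fin n)) 1,
      derNormSum n j φ z ≤ A * omegaW (τ - j) ‖z‖) ∧
    ∀ z ∈ ball (0 : EuclideanSpace ℂ (Fin n)) 1, tildeFn n φ z ≤ A * (1 - ‖z‖ ^ 2) ^ τ₀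

/-! ### Auxiliary machinery -/

section Aux

noncomputable def Wfn (t u : ℝ) : ℝ :=
  if t = 0 then Real.log (Real.exp 1 / u) else u ^ (min t 0)

lemma omegaW_eq_Wfn (t x : ℝ) : omegaW t x = Wfn t (1 - x ^ 2) := rfl

lemma Wfn_eq_rpow {t u : ℝ} (ht : t ≠ 0) : Wfn t u = u ^ (min t 0) := if_neg ht

lemma Wfn_pos {t u : ℝ} (hu : 0 < u) (hu1 : u ≤ 1) : 0 < Wfn t u := by
  unfold Wfn
  split
  · rw [Real.log_div (Real.exp_ne_zero 1) hu.ne', Real.log_exp]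
    have := Real.log_nonpos hu.le hu1
    linarith
  · exact Real.rpow_pos_of_pos hu _

lemma rpow_le_Wfn {t u : ℝ} (hu : 0 < u) (hu1 : u ≤ 1) : u ^ (min t 0) ≤ Wfn t u := by
  unfold Wfn
  split
  · next h =>
    subst h
    rw [Real.log_div (Real.exp_ne_zero 1) hu.ne', Real.log_exp]
    simp only [min_self, Real.rpow_zero]
    have := Real.log_nonpos hu.le hu1
    linarith
  · exact le_refl _

lemma Wfn_le {t u ε : ℝ} (hu : 0 < u) (hu1 : u ≤ 1) (hε : 0 < ε) :
    Wfn t u ≤ (1 + 1/ε) * u ^ (min t 0 - ε) := by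
  unfold Wfn
  split
  · next h =>
    subst h
    rw [Real.log_div (Real.exp_ne_zero 1) hu.ne', Real.log_exp]
    simp only [min_self, zero_sub]
    set v := u ^ (-ε) with hv
    have hv1 : 1 ≤ v := Real.one_le_rpow_of_pos_of_le_one_of_nonpos hu hu1 (by linarith)
    have hlog : Real.log (u ^ (-ε)) ≤ u ^ (-ε) - 1 :=
      Real.log_le_sub_one_of_pos (Real.rpow_pos_of_pos hu _)
    rw [Real.log_rpow hu] at hlog
    have h2 : -Real.log u ≤ (v - 1) / ε := by
      rw [le_div_iff₀ hε]; rw [← hv] at hlog; nlinarith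
    have h4 : (1 + 1/ε) * v = v + v / ε := by ring
    rw [h4]
    have h3 : (v - 1)/ε ≤ v / ε := by gcongr; linarith
    linarith
  · calc u ^ (min t 0) = u ^ (min t 0 - ε) * u ^ ε := by
          rw [← Real.rpow_add hu]; ring_nf
      _ ≤ u ^ (min t 0 - ε) * 1 := by
          apply mul_le_mul_of_nonneg_left (Real.rpow_le_one hu.le hu1 hε.le)
            (Real.rpow_pos_of_pos hu _).le
      _ ≤ (1 + 1/ε) * u ^ (min t 0 - ε) := by
          rw [mul_one]
          nlinarith [Real.rpow_pos_of_pos hu (min t 0 - ε), one_div_pos.2 hε]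

lemma Wfn_mul_le (a b c : ℝ) (hca : c ≤ a) (hcb : c ≤ b) (habc : 0 < a + b - c) :
    ∃ C > 0, ∀ u : ℝ, 0 < u → u ≤ 1 → Wfn a u * Wfn b u ≤ C * Wfn c u := by
  by_cases ha : a = 0 <;> by_cases hb : b = 0
  · subst ha; subst hb
    have hc : c < 0 := by linarith
    have hε : 0 < -c/2 := by linarith
    refine ⟨(1 + 1/(-c/2)) ^ 2, by positivity, fun u hu hu1 => ?_⟩
    have h1 := Wfn_le (t := 0) (ε := -c/2) hu hu1 hε
    simp only [min_self, zero_sub] at h1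
    have hW : 0 ≤ Wfn 0 u := (Wfn_pos hu hu1).le
    calc Wfn 0 u * Wfn 0 u ≤ ((1 + 1/(-c/2)) * u ^ (-(-c/2))) * ((1 + 1/(-c/2)) * u ^ (-(-c/2))) :=
          mul_le_mul h1 h1 hW (by positivity)
      _ = (1 + 1/(-c/2))^2 * (u ^ (-(-c/2)) * u ^ (-(-c/2))) := by ring
      _ = (1 + 1/(-c/2))^2 * u ^ c := by
          rw [← Real.rpow_add hu]
          congr 1
          ring
      _ ≤ (1 + 1/(-c/2))^2 * Wfn c u := by
          rw [Wfn_eq_rpow hc.ne, min_eq_left hc.le]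
  · subst ha
    by_cases hc : c = 0
    · subst hc
      have hbpos : 0 < b := lt_of_le_of_ne hcb (Ne.symm hb)
      refine ⟨1, one_pos, fun u hu hu1 => ?_⟩
      rw [Wfn_eq_rpow hb, min_eq_right hbpos.le, Real.rpow_zero, mul_one, one_mul]
    · have hc' : c < 0 := lt_of_le_of_ne (by linarith) hc
      have hcb' : c < b := by linarith
      set ε := min b 0 - c with hεdef
      have hε : 0 < ε := by
        rcases le_total b 0 with h | h
        · rw [hεdef, min_eq_left h]; linarith
        · rw [hεdef, min_eq_right h]; linarith
      refine ⟨1 + 1/ε, by positivity, fun u hu hu1 => ?_⟩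
      have h1 := Wfn_le (t := 0) (ε := ε) hu hu1 hε
      simp only [min_self, zero_sub] at h1
      calc Wfn 0 u * Wfn b u = Wfn 0 u * u ^ (min b 0) := by rw [Wfn_eq_rpow hb]
        _ ≤ ((1 + 1/ε) * u ^ (-ε)) * u ^ (min b 0) :=
            mul_le_mul_of_nonneg_right h1 (Real.rpow_pos_of_pos hu _).le
        _ = (1 + 1/ε) * u ^ (-ε + min b 0) := by rw [Real.rpow_add hu]; ring
        _ = (1 + 1/ε) * u ^ c := by rw [hεdef]; ring_nf
        _ = (1 + 1/ε) * Wfn c u := by rw [Wfn_eq_rpow hc, min_eq_left hc'.le]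
  · subst hb
    by_cases hc : c = 0
    · subst hc
      have hapos : 0 < a := lt_of_le_of_ne hca (Ne.symm ha)
      refine ⟨1, one_pos, fun u hu hu1 => ?_⟩
      rw [Wfn_eq_rpow ha, min_eq_right hapos.le, Real.rpow_zero, one_mul]
    · have hc' : c < 0 := lt_of_le_of_ne (by linarith) hc
      have hca' : c < a := by linarith
      set ε := min a 0 - c with hεdef
      have hε : 0 < ε := by
        rcases le_total a 0 with h | h
        · rw [hεdef, min_eq_left h]; linarith
        · rw [hεdef, min_eq_right h]; linarith
      refine ⟨1 + 1/ε, by positivity, fun u hu hu1 => ?_⟩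
      have h1 := Wfn_le (t := 0) (ε := ε) hu hu1 hε
      simp only [min_self, zero_sub] at h1
      calc Wfn a u * Wfn 0 u = u ^ (min a 0) * Wfn 0 u := by rw [Wfn_eq_rpow ha]
        _ ≤ u ^ (min a 0) * ((1 + 1/ε) * u ^ (-ε)) :=
            mul_le_mul_of_nonneg_left h1 (Real.rpow_pos_of_pos hu _).le
        _ = (1 + 1/ε) * u ^ (min a 0 + -ε) := by rw [Real.rpow_add hu]; ring
        _ = (1 + 1/ε) * u ^ c := by rw [hεdef]; ring_nf
        _ = (1 + 1/ε) * Wfn c u := by rw [Wfn_eq_rpow hc, min_eq_left hc'.le]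
  · refine ⟨1, one_pos, fun u hu hu1 => ?_⟩
    have hmin : min c 0 ≤ min a 0 + min b 0 := by
      rcases min_cases a 0 with ⟨h1, h2⟩ | ⟨h1, h2⟩ <;>
        rcases min_cases b 0 with ⟨h3, h4⟩ | ⟨h3, h4⟩ <;>
        rcases min_cases c 0 with ⟨h5, h6⟩ | ⟨h5, h6⟩ <;> rw [h1, h3, h5] <;> linarith
    rw [Wfn_eq_rpow ha, Wfn_eq_rpow hb, ← Real.rpow_add hu, one_mul]
    calc u ^ (min a 0 + min b 0) ≤ u ^ (min c 0) :=
          Real.rpow_le_rpow_of_exponent_ge hu hu1 hmin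
      _ ≤ Wfn c u := rpow_le_Wfn hu hu1

lemma exists_C0 (τ ϑ : ℝ) (m : ℕ) (hϑ : 0 < ϑ) (hϑτ : ϑ ≤ τ) :
    ∃ C0 > 0, ∀ i l : ℕ, i ≤ l → l ≤ m → ∀ u : ℝ, 0 < u → u ≤ 1 →
      Wfn (τ - i) u * Wfn (ϑ - (l - i : ℕ)) u ≤ C0 * Wfn (ϑ - l) u := by
  have H : ∀ p : ℕ × ℕ, ∃ C, 0 < C ∧ (p.1 ≤ p.2 → ∀ u : ℝ, 0 < u → u ≤ 1 →
      Wfn (τ - p.1) u * Wfn (ϑ - (p.2 - p.1 : ℕ)) u ≤ C * Wfn (ϑ - p.2) u) := by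
    rintro ⟨i, l⟩
    by_cases hil : i ≤ l
    · have hsub : ((l - i : ℕ) : ℝ) = (l : ℝ) - i := by
        push_cast [Nat.cast_sub hil]; ring
      have hil' : (i : ℝ) ≤ l := Nat.cast_le.2 hil
      obtain ⟨C, hC, h⟩ := Wfn_mul_le (τ - i) (ϑ - ((l - i : ℕ) : ℝ)) (ϑ - l)
        (by linarith) (by rw [hsub]; linarith) (by rw [hsub]; linarith)
      exact ⟨C, hC, fun _ => h⟩
    · exact ⟨1, one_pos, fun h => absurd h hil⟩
  choose Cf hCf using H
  refine ⟨∑ p ∈ Finset.range (m+1) ×ˢ Finset.range (m+1), Cf p, ?_, ?_⟩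
  · apply Finset.sum_pos (fun p _ => (hCf p).1)
    exact ⟨(0, 0), by simp⟩
  · intro i l hil hlm u hu hu1
    calc Wfn (τ - i) u * Wfn (ϑ - (l - i : ℕ)) u ≤ Cf (i, l) * Wfn (ϑ - l) u :=
          (hCf (i, l)).2 hil u hu hu1
      _ ≤ (∑ p ∈ Finset.range (m+1) ×ˢ Finset.range (m+1), Cf p) * Wfn (ϑ - l) u := by
          apply mul_le_mul_of_nonneg_right ?_ (Wfn_pos hu hu1).le
          apply Finset.single_le_sum (fun p _ => (hCf p).1.le)
          simp only [Finset.mem_product, Finset.mem_range]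
          omega

end Aux
section Calc

lemma wirtIter_nil (f : EuclideanSpace ℂ (Fin n) → ℂ) : wirtIter n [] f = f := rfl

lemma wirtIter_cons (a : Fin n) (L : List (Fin n)) (f : EuclideanSpace ℂ (Fin n) → ℂ) :
    wirtIter n (a :: L) f = wirt n a (wirtIter n L f) := rfl

lemma wirt_contDiffOn {M : ℕ} {f : EuclideanSpace ℂ (Fin n) → ℂ}
    (hf : ContDiffOn ℝ ((M + 1 : ℕ) : ℕ∞) f (ball (0 : EuclideanSpace ℂ (Fin n)) 1)) (j : Fin n) :
    ContDiffOn ℝ ((M : ℕ) : ℕ∞) (wirt n j f) (ball (0 : EuclideanSpace ℂ (Fin n)) 1) := by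
  have hd : ContDiffOn ℝ ((M : ℕ) : ℕ∞) (fderiv ℝ f) (ball (0 : EuclideanSpace ℂ (Fin n)) 1) :=
    hf.fderiv_of_isOpen isOpen_ball (by exact_mod_cast le_refl _)
  unfold wirt
  exact ((hd.clm_apply contDiffOn_const).sub
    (contDiffOn_const.mul (hd.clm_apply contDiffOn_const))).div_const 2

lemma wirtIter_contDiffOn {M : ℕ} {f : EuclideanSpace ℂ (Fin n) → ℂ}
    (hf : ContDiffOn ℝ ((M : ℕ) : ℕ∞) f (ball (0 : EuclideanSpace ℂ (Fin n)) 1))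
    (L : List (Fin n)) (hL : L.length ≤ M) :
    ContDiffOn ℝ ((M - L.length : ℕ) : ℕ∞) (wirtIter n L f)
      (ball (0 : EuclideanSpace ℂ (Fin n)) 1) := by
  induction L with
  | nil => simpa [wirtIter_nil] using hf
  | cons a L ih =>
    have hL' : L.length ≤ M := le_trans (by simp) hL
    have h1 := ih hL'
    have hlen : M - L.length = (M - (a :: L).length) + 1 := by
      simp only [List.length_cons] at hL ⊢
      omega
    rw [hlen] at h1
    exact (wirtIter_cons a L f) ▸ wirt_contDiffOn h1 a

lemma wirtIter_diffAt {M : ℕ} {f : EuclideanSpace ℂ (Fin n) → ℂ}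
    (hf : ContDiffOn ℝ ((M : ℕ) : ℕ∞) f (ball (0 : EuclideanSpace ℂ (Fin n)) 1))
    (L : List (Fin n)) (hL : L.length < M) {z : EuclideanSpace ℂ (Fin n)}
    (hz : z ∈ ball (0 : EuclideanSpace ℂ (Fin n)) 1) :
    DifferentiableAt ℝ (wirtIter n L f) z := by
  have h1 := wirtIter_contDiffOn hf L hL.le
  have h2 : (1 : ℕ∞) ≤ ((M - L.length : ℕ) : ℕ∞) := by
    exact_mod_cast Nat.one_le_iff_ne_zero.2 (by omega)
  exact (h1.differentiableOn (by exact_mod_cast (show M - L.length ≠ 0 by omega))).differentiableAt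
    (isOpen_ball.mem_nhds hz)

lemma wirt_congr {f g : EuclideanSpace ℂ (Fin n) → ℂ} {z : EuclideanSpace ℂ (Fin n)} (j : Fin n)
    (hfg : Set.EqOn f g (ball (0 : EuclideanSpace ℂ (Fin n)) 1))
    (hz : z ∈ ball (0 : EuclideanSpace ℂ (Fin n)) 1) : wirt n j f z = wirt n j g z := by
  have h : fderiv ℝ f z = fderiv ℝ g z :=
    Filter.EventuallyEq.fderiv_eq (hfg.eventuallyEq_of_mem (isOpen_ball.mem_nhds hz))
  simp [wirt, h]

lemma wirt_mul {f g : EuclideanSpace ℂ (Fin n) → ℂ} {z : EuclideanSpace ℂ (Fin n)} (j : Fin n)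
    (hf : DifferentiableAt ℝ f z) (hg : DifferentiableAt ℝ g z) :
    wirt n j (fun w => f w * g w) z = f z * wirt n j g z + g z * wirt n j f z := by
  unfold wirt
  rw [fderiv_fun_mul hf hg]
  simp only [ContinuousLinearMap.add_apply, ContinuousLinearMap.smul_apply, smul_eq_mul]
  ring

lemma wirtBar_mul {f g : EuclideanSpace ℂ (Fin n) → ℂ} {z : EuclideanSpace ℂ (Fin n)} (j : Fin n)
    (hf : DifferentiableAt ℝ f z) (hg : DifferentiableAt ℝ g z) :
    wirtBar n j (fun w => f w * g w) z = f z * wirtBar n j g z + g z * wirtBar n j f z := by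
  unfold wirtBar
  rw [fderiv_fun_mul hf hg]
  simp only [ContinuousLinearMap.add_apply, ContinuousLinearMap.smul_apply, smul_eq_mul]
  ring

lemma wirt_listSum {ι : Type} (l : List ι) (F : ι → EuclideanSpace ℂ (Fin n) → ℂ)
    {z : EuclideanSpace ℂ (Fin n)} (j : Fin n)
    (hF : ∀ i ∈ l, DifferentiableAt ℝ (F i) z) :
    wirt n j (fun w => (l.map (fun i => F i w)).sum) z =
      (l.map (fun i => wirt n j (F i) z)).sum := by
  induction l with
  | nil => simp [wirt, fderiv_const]
  | cons a l ih =>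
    have hd : DifferentiableAt ℝ (fun w => (l.map (fun i => F i w)).sum) z := by
      clear ih
      induction l with
      | nil => simpa using differentiableAt_const (0 : ℂ)
      | cons b l ih2 =>
        simp only [List.map_cons, List.sum_cons]
        exact (hF b (by simp)).add (ih2 (fun i hi => hF i (by
          simp only [List.mem_cons] at hi ⊢
          tauto)))
    simp only [List.map_cons, List.sum_cons]
    rw [show (fun w => F a w + (l.map (fun i => F i w)).sum) =
      (fun w => F a w + (fun w' => (l.map (fun i => F i w')).sum) w) from rfl]
    unfold wirt
    rw [fderiv_fun_add (hF a (by simp)) hd]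
    simp only [ContinuousLinearMap.add_apply]
    have := ih (fun i hi => hF i (List.mem_cons_of_mem a hi))
    unfold wirt at this
    rw [← this]
    ring

def splits {α : Type} : List α → List (List α × List α)
  | [] => [([], [])]
  | a :: L => ((splits L).map fun pq => (a :: pq.1, pq.2)) ++
      ((splits L).map fun pq => (pq.1, a :: pq.2))

lemma splits_len {α : Type} (L : List α) :
    ∀ pq ∈ splits L, pq.1.length + pq.2.length = L.length := by
  induction L with
  | nil => intro pq h; simp [splits] at h; simp [h]
  | cons a L ih =>
    intro pq h
    simp only [splits, List.mem_append, List.mem_map] at h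
    rcases h with ⟨q, hq, rfl⟩ | ⟨q, hq, rfl⟩ <;>
      simp only [List.length_cons] <;> have := ih q hq <;> omega

lemma splits_length {α : Type} (L : List α) : (splits L).length = 2 ^ L.length := by
  induction L with
  | nil => simp [splits]
  | cons a L ih => simp [splits, ih]; ring

lemma leibniz {M : ℕ} {φ ψ : EuclideanSpace ℂ (Fin n) → ℂ}
    (hφ : ContDiffOn ℝ ((M : ℕ) : ℕ∞) φ (ball (0 : EuclideanSpace ℂ (Fin n)) 1))
    (hψ : ContDiffOn ℝ ((M : ℕ) : ℕ∞) ψ (ball (0 : EuclideanSpace ℂ (Fin n)) 1))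
    (L : List (Fin n)) (hL : L.length ≤ M) :
    ∀ z ∈ ball (0 : EuclideanSpace ℂ (Fin n)) 1,
      wirtIter n L (fun w => φ w * ψ w) z =
        ((splits L).map (fun pq => wirtIter n pq.1 φ z * wirtIter n pq.2 ψ z)).sum := by
  induction L with
  | nil =>
    intro z hz
    simp [splits, wirtIter]
  | cons a L ih =>
    intro z hz
    have hL' : L.length ≤ M := by simp at hL; omega
    have hLlt : L.length < M := by simp at hL; omega
    rw [wirtIter_cons]
    have hEq : Set.EqOn (wirtIter n L (fun w => φ w * ψ w))
        (fun w => ((splits L).map (fun pq => wirtIter n pq.1 φ w * wirtIter n pq.2 ψ w)).sum)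
        (ball (0 : EuclideanSpace ℂ (Fin n)) 1) := fun w hw => ih hL' w hw
    rw [wirt_congr a hEq hz]
    have hdφ : ∀ pq ∈ splits L, DifferentiableAt ℝ (wirtIter n pq.1 φ) z := fun pq hpq =>
      wirtIter_diffAt hφ pq.1 (by have := splits_len L pq hpq; omega) hz
    have hdψ : ∀ pq ∈ splits L, DifferentiableAt ℝ (wirtIter n pq.2 ψ) z := fun pq hpq =>
      wirtIter_diffAt hψ pq.2 (by have := splits_len L pq hpq; omega) hz
    rw [wirt_listSum (splits L)
      (fun pq w => wirtIter n pq.1 φ w * wirtIter n pq.2 ψ w) a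
      (fun pq hpq => (hdφ pq hpq).mul (hdψ pq hpq))]
    have hterm : ∀ pq ∈ splits L,
        wirt n a (fun w => wirtIter n pq.1 φ w * wirtIter n pq.2 ψ w) z =
          (wirtIter n pq.1 φ z * wirtIter n (a :: pq.2) ψ z) +
          (wirtIter n (a :: pq.1) φ z * wirtIter n pq.2 ψ z) := by
      intro pq hpq
      rw [wirt_mul a (hdφ pq hpq) (hdψ pq hpq), wirtIter_cons, wirtIter_cons]
      ring
    rw [List.map_congr_left hterm, List.sum_map_add]
    simp only [splits, List.map_append, List.map_map, List.sum_append]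
    rw [add_comm]
    congr 1

lemma abs_list_sum_le (l : List ℂ) : ‖l.sum‖ ≤ (l.map (fun x => ‖x‖)).sum := by
  induction l with
  | nil => simp
  | cons a l ih =>
    simp only [List.sum_cons, List.map_cons]
    exact le_trans (norm_add_le _ _) (by linarith)

lemma list_sum_le_length_mul {α : Type} (l : List α) (f : α → ℝ) (c : ℝ)
    (h : ∀ x ∈ l, f x ≤ c) : (l.map f).sum ≤ l.length * c := by
  induction l with
  | nil => simp
  | cons a l ih =>
    simp only [List.map_cons, List.sum_cons, List.length_cons]
    have h1 := h a (by simp)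
    have h2 := ih (fun x hx => h x (List.mem_cons_of_mem a hx))
    push_cast
    linarith

lemma wirtIter_le_derNormSum (L : List (Fin n)) (f : EuclideanSpace ℂ (Fin n) → ℂ)
    (z : EuclideanSpace ℂ (Fin n)) :
    ‖wirtIter n L f z‖ ≤ derNormSum n L.length f z := by
  unfold derNormSum
  have h := Finset.single_le_sum
    (f := fun v : Fin L.length → Fin n => ‖wirtIter n (List.ofFn v) f z‖)
    (fun v _ => norm_nonneg _) (Finset.mem_univ L.get)
  simp only [List.ofFn_get] at h
  exact h

lemma derNormSum_zero (f : EuclideanSpace ℂ (Fin n) → ℂ) (z : EuclideanSpace ℂ (Fin n)) :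
    derNormSum n 0 f z = ‖f z‖ := by
  unfold derNormSum
  rw [Fintype.sum_unique]
  simp [wirtIter]

lemma tildeFn_nonneg {f : EuclideanSpace ℂ (Fin n) → ℂ} {z : EuclideanSpace ℂ (Fin n)}
    (hz : z ∈ ball (0 : EuclideanSpace ℂ (Fin n)) 1) : 0 ≤ tildeFn n f z := by
  have hz1 : ‖z‖ < 1 := mem_ball_zero_iff.1 hz
  have hu0 : (0:ℝ) ≤ 1 - ‖z‖ ^ 2 := by nlinarith [norm_nonneg z]
  unfold tildeFn
  have h1 : (0:ℝ) ≤ ∑ j, ‖wirtBar n j f z‖ :=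
    Finset.sum_nonneg fun _ _ => norm_nonneg _
  have h2 : (0:ℝ) ≤ ∑ i, ∑ j, (if i < j then ‖tangBar n i j f z‖ else 0) :=
    Finset.sum_nonneg fun _ _ => Finset.sum_nonneg fun _ _ => by positivity
  exact add_nonneg (mul_nonneg hu0 h1) (mul_nonneg (Real.sqrt_nonneg _) h2)

lemma tildeFn_mul_le {φ ψ : EuclideanSpace ℂ (Fin n) → ℂ} {z : EuclideanSpace ℂ (Fin n)}
    (hz : z ∈ ball (0 : EuclideanSpace ℂ (Fin n)) 1)
    (hφ : DifferentiableAt ℝ φ z) (hψ : DifferentiableAt ℝ ψ z) :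
    tildeFn n (φ * ψ) z ≤
      ‖φ z‖ * tildeFn n ψ z + ‖ψ z‖ * tildeFn n φ z := by
  have hwb : ∀ j : Fin n, wirtBar n j (φ * ψ) z =
      φ z * wirtBar n j ψ z + ψ z * wirtBar n j φ z := fun j => wirtBar_mul j hφ hψ
  have htb : ∀ i j : Fin n, tangBar n i j (φ * ψ) z =
      φ z * tangBar n i j ψ z + ψ z * tangBar n i j φ z := by
    intro i j
    unfold tangBar
    rw [hwb i, hwb j]
    ring
  have hz1 : ‖z‖ < 1 := mem_ball_zero_iff.1 hz
  have hu0 : (0:ℝ) ≤ 1 - ‖z‖ ^ 2 := by nlinarith [norm_nonneg z]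
  have hsq : (0:ℝ) ≤ Real.sqrt (1 - ‖z‖ ^ 2) := Real.sqrt_nonneg _
  have hS1 : ∑ j, ‖wirtBar n j (φ * ψ) z‖ ≤
      ‖φ z‖ * ∑ j, ‖wirtBar n j ψ z‖ +
      ‖ψ z‖ * ∑ j, ‖wirtBar n j φ z‖ := by
    rw [Finset.mul_sum, Finset.mul_sum, ← Finset.sum_add_distrib]
    apply Finset.sum_le_sum
    intro j _
    rw [hwb j]
    simpa [map_mul] using norm_add_le (φ z * wirtBar n j ψ z) (ψ z * wirtBar n j φ z)
  have hS2 : (∑ i, ∑ j, if i < j then ‖tangBar n i j (φ * ψ) z‖ else 0) ≤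
      ‖φ z‖ * (∑ i, ∑ j, if i < j then ‖tangBar n i j ψ z‖ else 0) +
      ‖ψ z‖ * (∑ i, ∑ j, if i < j then ‖tangBar n i j φ z‖ else 0) := by
    rw [Finset.mul_sum, Finset.mul_sum, ← Finset.sum_add_distrib]
    apply Finset.sum_le_sum
    intro i _
    rw [Finset.mul_sum, Finset.mul_sum, ← Finset.sum_add_distrib]
    apply Finset.sum_le_sum
    intro j _
    split_ifs with h
    · rw [htb i j]
      simpa [map_mul] using norm_add_le (φ z * tangBar n i j ψ z) (ψ z * tangBar n i j φ z)
    · simp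
  unfold tildeFn
  calc (1 - ‖z‖ ^ 2) * ∑ j, ‖wirtBar n j (φ * ψ) z‖ +
      Real.sqrt (1 - ‖z‖ ^ 2) *
        ∑ i, ∑ j, (if i < j then ‖tangBar n i j (φ * ψ) z‖ else 0) ≤
      (1 - ‖z‖ ^ 2) * (‖φ z‖ * ∑ j, ‖wirtBar n j ψ z‖ +
        ‖ψ z‖ * ∑ j, ‖wirtBar n j φ z‖) +
      Real.sqrt (1 - ‖z‖ ^ 2) *
        (‖φ z‖ * (∑ i, ∑ j, if i < j then ‖tangBar n i j ψ z‖ else 0) +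
         ‖ψ z‖ * (∑ i, ∑ j, if i < j then ‖tangBar n i j φ z‖ else 0)) :=
      add_le_add (mul_le_mul_of_nonneg_left hS1 hu0) (mul_le_mul_of_nonneg_left hS2 hsq)
    _ = ‖φ z‖ * ((1 - ‖z‖ ^ 2) * ∑ j, ‖wirtBar n j ψ z‖ +
          Real.sqrt (1 - ‖z‖ ^ 2) *
            ∑ i, ∑ j, (if i < j then ‖tangBar n i j ψ z‖ else 0)) +
        ‖ψ z‖ * ((1 - ‖z‖ ^ 2) * ∑ j, ‖wirtBar n j φ z‖ +
          Real.sqrt (1 - ‖z‖ ^ 2) *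
            ∑ i, ∑ j, (if i < j then ‖tangBar n i j φ z‖ else 0)) := by ring

end Calc
/-- Boundedness of multiplication: `‖φψ‖_{G^{ϑ₀}_{ϑ,m}} ≲ ‖φ‖_{G^{τ₀}_{τ,k}} ‖ψ‖_{G^{ϑ₀}_{ϑ,m}}`. -/
theorem stmt12 (n : ℕ) (τ₀ τ ϑ₀ ϑ : ℝ) (k m : ℕ)
    (h1 : 0 < ϑ₀) (h2 : ϑ₀ ≤ τ₀) (h3 : τ₀ < 1 / 2) (h4 : 0 < ϑ) (h5 : ϑ ≤ τ)
    (h6 : m ≤ k) (h7 : τ < k) (h8 : ϑ < m) :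
    ∃ C > 0, ∀ (φ ψ : EuclideanSpace ℂ (Fin n) → ℂ) (A B : ℝ), 0 ≤ A → 0 ≤ B →
      InG n τ₀ τ k A φ → InG n ϑ₀ ϑ m B ψ → InG n ϑ₀ ϑ m (C * A * B) (φ * ψ) := by
  obtain ⟨C0, hC0, hkey⟩ := exists_C0 τ ϑ m h4 h5
  have hτpos : 0 < τ := lt_of_lt_of_le h4 h5
  set Cbig : ℝ := 2 + ((n : ℝ) + 1) ^ m * 2 ^ m * C0 with hCdef
  have hX : (0:ℝ) ≤ ((n : ℝ) + 1) ^ m * 2 ^ m * C0 := by positivity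
  have hCpos : 0 < Cbig := by positivity
  refine ⟨Cbig, hCpos, ?_⟩
  rintro φ ψ A B hA hB ⟨hφs, hφc, hφd, hφt⟩ ⟨hψs, hψc, hψd, hψt⟩
  have hφm : ContDiffOn ℝ ((m : ℕ) : ℕ∞) φ (ball (0 : EuclideanSpace ℂ (Fin n)) 1) :=
    hφs.of_le (by exact_mod_cast h6)
  have hmul : (φ * ψ) = fun w => φ w * ψ w := rfl
  have hk1 : 1 ≤ k := by
    have : (0:ℝ) < (k : ℝ) := lt_trans hτpos h7
    exact_mod_cast Nat.one_le_iff_ne_zero.2 (by exact_mod_cast Nat.pos_of_ne_zero (by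
      intro h; rw [h] at this; norm_num at this) |>.ne')
  have hm1 : 1 ≤ m := by
    have : (0:ℝ) < (m : ℝ) := lt_trans h4 h8
    exact_mod_cast Nat.pos_of_ne_zero (by intro h; rw [h] at this; norm_num at this)
  refine ⟨?_, hφc.mul hψc, ?_, ?_⟩
  · exact hφm.mul hψs
  · -- derivative bounds
    intro j hj z hz
    have hz1 : ‖z‖ < 1 := mem_ball_zero_iff.1 hz
    have hu : (0:ℝ) < 1 - ‖z‖ ^ 2 := by nlinarith [norm_nonneg z]
    have hu1 : 1 - ‖z‖ ^ 2 ≤ 1 := by nlinarith [norm_nonneg z]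
    have hW : 0 < Wfn (ϑ - j) (1 - ‖z‖ ^ 2) := Wfn_pos hu hu1
    have hv : ∀ v : Fin j → Fin n, ‖wirtIter n (List.ofFn v) (φ * ψ) z‖ ≤
        (2:ℝ) ^ m * (C0 * (A * B * Wfn (ϑ - j) (1 - ‖z‖ ^ 2))) := by
      intro v
      have hlen : (List.ofFn v).length = j := List.length_ofFn
      have hLeib := leibniz hφm hψs (List.ofFn v) (by rw [hlen]; exact hj) z hz
      rw [hmul, hLeib]
      have hbound : ∀ pq ∈ splits (List.ofFn v),
          ‖wirtIter n pq.1 φ z * wirtIter n pq.2 ψ z‖ ≤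
            C0 * (A * B * Wfn (ϑ - j) (1 - ‖z‖ ^ 2)) := by
        intro pq hpq
        have hlensum := splits_len _ pq hpq
        rw [hlen] at hlensum
        have hq : pq.2.length = j - pq.1.length := by omega
        have h1 : ‖wirtIter n pq.1 φ z‖ ≤
            A * Wfn (τ - pq.1.length) (1 - ‖z‖ ^ 2) := by
          calc ‖wirtIter n pq.1 φ z‖ ≤ derNormSum n pq.1.length φ z :=
              wirtIter_le_derNormSum pq.1 φ z
            _ ≤ A * omegaW (τ - pq.1.length) ‖z‖ := hφd pq.1.length (by omega) z hz
            _ = A * Wfn (τ - pq.1.length) (1 - ‖z‖ ^ 2) := by rw [omegaW_eq_Wfn]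
        have h2 : ‖wirtIter n pq.2 ψ z‖ ≤
            B * Wfn (ϑ - pq.2.length) (1 - ‖z‖ ^ 2) := by
          calc ‖wirtIter n pq.2 ψ z‖ ≤ derNormSum n pq.2.length ψ z :=
              wirtIter_le_derNormSum pq.2 ψ z
            _ ≤ B * omegaW (ϑ - pq.2.length) ‖z‖ := hψd pq.2.length (by omega) z hz
            _ = B * Wfn (ϑ - pq.2.length) (1 - ‖z‖ ^ 2) := by rw [omegaW_eq_Wfn]
        rw [norm_mul]
        calc ‖wirtIter n pq.1 φ z‖ * ‖wirtIter n pq.2 ψ z‖ ≤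
            (A * Wfn (τ - pq.1.length) (1 - ‖z‖ ^ 2)) *
              (B * Wfn (ϑ - pq.2.length) (1 - ‖z‖ ^ 2)) :=
            mul_le_mul h1 h2 (norm_nonneg _) (mul_nonneg hA (Wfn_pos hu hu1).le)
          _ = (A * B) * (Wfn (τ - pq.1.length) (1 - ‖z‖ ^ 2) *
              Wfn (ϑ - pq.2.length) (1 - ‖z‖ ^ 2)) := by ring
          _ ≤ (A * B) * (C0 * Wfn (ϑ - j) (1 - ‖z‖ ^ 2)) := by
              apply mul_le_mul_of_nonneg_left ?_ (mul_nonneg hA hB)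
              rw [hq]
              exact hkey pq.1.length j (by omega) hj _ hu hu1
          _ = C0 * (A * B * Wfn (ϑ - j) (1 - ‖z‖ ^ 2)) := by ring
      calc ‖(List.map
            (fun pq => wirtIter n pq.1 φ z * wirtIter n pq.2 ψ z) (splits (List.ofFn v))).sum‖ ≤
          ((List.map (fun pq => wirtIter n pq.1 φ z * wirtIter n pq.2 ψ z)
            (splits (List.ofFn v))).map (fun x => ‖x‖)).sum := abs_list_sum_le _
        _ = ((splits (List.ofFn v)).map
            (fun pq => ‖wirtIter n pq.1 φ z * wirtIter n pq.2 ψ z‖)).sum := by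
            rw [List.map_map]; rfl
        _ ≤ ((splits (List.ofFn v)).length : ℝ) * (C0 * (A * B * Wfn (ϑ - j) (1 - ‖z‖ ^ 2))) :=
            list_sum_le_length_mul _ _ _ hbound
        _ ≤ (2:ℝ) ^ m * (C0 * (A * B * Wfn (ϑ - j) (1 - ‖z‖ ^ 2))) := by
            apply mul_le_mul_of_nonneg_right ?_ (by positivity)
            rw [splits_length, hlen]
            calc ((2 ^ j : ℕ) : ℝ) = (2:ℝ) ^ j := by push_cast; ring
              _ ≤ (2:ℝ) ^ m := by
                  exact pow_le_pow_right₀ (by norm_num) hj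
        _ ≤ (2:ℝ) ^ m * (C0 * (A * B * Wfn (ϑ - j) (1 - ‖z‖ ^ 2))) := le_refl _
    have hcard : derNormSum n j (φ * ψ) z ≤
        ((n : ℝ) + 1) ^ m * ((2:ℝ) ^ m * (C0 * (A * B * Wfn (ϑ - j) (1 - ‖z‖ ^ 2)))) := by
      unfold derNormSum
      calc (∑ v : Fin j → Fin n, ‖wirtIter n (List.ofFn v) (φ * ψ) z‖) ≤
          (Finset.univ : Finset (Fin j → Fin n)).card •
            ((2:ℝ) ^ m * (C0 * (A * B * Wfn (ϑ - j) (1 - ‖z‖ ^ 2)))) :=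
          Finset.sum_le_card_nsmul _ _ _ (fun v _ => hv v)
        _ = (Fintype.card (Fin j → Fin n) : ℝ) *
            ((2:ℝ) ^ m * (C0 * (A * B * Wfn (ϑ - j) (1 - ‖z‖ ^ 2)))) := by
            rw [Finset.card_univ, nsmul_eq_mul]
        _ ≤ ((n : ℝ) + 1) ^ m * ((2:ℝ) ^ m * (C0 * (A * B * Wfn (ϑ - j) (1 - ‖z‖ ^ 2)))) := by
            apply mul_le_mul_of_nonneg_right ?_ (by positivity)
            have hcf : Fintype.card (Fin j → Fin n) = n ^ j := by
              simp [Fintype.card_fun]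
            rw [hcf]
            calc ((n ^ j : ℕ) : ℝ) = ((n : ℝ)) ^ j := by push_cast; ring
              _ ≤ ((n : ℝ) + 1) ^ j := by
                  exact pow_le_pow_left₀ (Nat.cast_nonneg n) (by linarith) j
              _ ≤ ((n : ℝ) + 1) ^ m := by
                  refine pow_le_pow_right₀ ?_ hj
                  linarith [(Nat.cast_nonneg n : (0:ℝ) ≤ (n:ℝ))]
    rw [omegaW_eq_Wfn]
    calc derNormSum n j (φ * ψ) z ≤
        ((n : ℝ) + 1) ^ m * ((2:ℝ) ^ m * (C0 * (A * B * Wfn (ϑ - j) (1 - ‖z‖ ^ 2)))) := hcard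
      _ = (((n : ℝ) + 1) ^ m * 2 ^ m * C0) * (A * B * Wfn (ϑ - j) (1 - ‖z‖ ^ 2)) := by ring
      _ ≤ Cbig * (A * B * Wfn (ϑ - j) (1 - ‖z‖ ^ 2)) :=
          mul_le_mul_of_nonneg_right (by rw [hCdef]; linarith)
            (mul_nonneg (mul_nonneg hA hB) hW.le)
      _ = Cbig * A * B * Wfn (ϑ - j) (1 - ‖z‖ ^ 2) := by ring
  · -- tilde bound
    intro z hz
    have hz1 : ‖z‖ < 1 := mem_ball_zero_iff.1 hz
    have hu : (0:ℝ) < 1 - ‖z‖ ^ 2 := by nlinarith [norm_nonneg z]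
    have hu1 : 1 - ‖z‖ ^ 2 ≤ 1 := by nlinarith [norm_nonneg z]
    have hdφ : DifferentiableAt ℝ φ z :=
      (hφs.differentiableOn (by exact_mod_cast (show k ≠ 0 by omega))).differentiableAt
        (isOpen_ball.mem_nhds hz)
    have hdψ : DifferentiableAt ℝ ψ z :=
      (hψs.differentiableOn (by exact_mod_cast (show m ≠ 0 by omega))).differentiableAt
        (isOpen_ball.mem_nhds hz)
    have habsφ : ‖φ z‖ ≤ A := by
      have h0 := hφd 0 (Nat.zero_le k) z hz
      rw [derNormSum_zero] at h0
      have hω : omegaW (τ - (0 : ℕ)) ‖z‖ = 1 := by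
        rw [omegaW_eq_Wfn, Wfn_eq_rpow (by push_cast; linarith),
          min_eq_right (by push_cast; linarith), Real.rpow_zero]
      rw [hω, mul_one] at h0
      exact h0
    have habsψ : ‖ψ z‖ ≤ B := by
      have h0 := hψd 0 (Nat.zero_le m) z hz
      rw [derNormSum_zero] at h0
      have hω : omegaW (ϑ - (0 : ℕ)) ‖z‖ = 1 := by
        rw [omegaW_eq_Wfn, Wfn_eq_rpow (by push_cast; linarith),
          min_eq_right (by push_cast; linarith), Real.rpow_zero]
      rw [hω, mul_one] at h0
      exact h0
    have htφ := hφt z hz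
    have htψ := hψt z hz
    have hτϑ : (1 - ‖z‖ ^ 2) ^ τ₀ ≤ (1 - ‖z‖ ^ 2) ^ ϑ₀ :=
      Real.rpow_le_rpow_of_exponent_ge hu hu1 h2
    have hrp : (0:ℝ) < (1 - ‖z‖ ^ 2) ^ ϑ₀ := Real.rpow_pos_of_pos hu _
    calc tildeFn n (φ * ψ) z ≤
        ‖φ z‖ * tildeFn n ψ z + ‖ψ z‖ * tildeFn n φ z :=
        tildeFn_mul_le hz hdφ hdψ
      _ ≤ A * (B * (1 - ‖z‖ ^ 2) ^ ϑ₀) + B * (A * (1 - ‖z‖ ^ 2) ^ ϑ₀) := by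
          apply add_le_add
          · exact mul_le_mul habsφ htψ (tildeFn_nonneg hz) hA
          · apply mul_le_mul habsψ ?_ (tildeFn_nonneg hz) hB
            exact le_trans htφ (mul_le_mul_of_nonneg_left hτϑ hA)
      _ = 2 * (A * B * ((1 - ‖z‖ ^ 2) ^ ϑ₀)) := by ring
      _ ≤ Cbig * (A * B * ((1 - ‖z‖ ^ 2) ^ ϑ₀)) :=
          mul_le_mul_of_nonneg_right (by rw [hCdef]; linarith)
            (mul_nonneg (mul_nonneg hA hB) hrp.le)
      _ = Cbig * A * B * (1 - ‖z‖ ^ 2) ^ ϑ₀ := by ring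
end
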